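/- Let Θ be a finite nonempty set and Φ : Δ_Θ → ℝ a differentiable entropy. Then the loss λ^Φ(μ) := Φ*(∇Φ(μ))·𝟏 − ∇Φ(μ) is proper: for all μ, μ' in the relative interior of Δ_Θ, ⟨μ, λ^Φ(μ')⟩ ≥ ⟨μ, λ^Φ(μ)⟩. -/

import Mathlib

open Finset

/-- The probability simplex over a finite set `Θ`. -/
def probSimplex (Θ : Type*) [Fintype Θ] : Set (Θ → ℝ) :=
  {μ | (∀ θ, 0 ≤ μ θ) ∧ ∑ θ, μ θ = 1}

/-- The relative interior of the probability simplex. -/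
def probSimplexRI (Θ : Type*) [Fintype Θ] : Set (Θ → ℝ) :=
  {μ | (∀ θ, 0 < μ θ) ∧ ∑ θ, μ θ = 1}

/-- Standard inner product on `ℝ^Θ`. -/
noncomputable def ip {Θ : Type*} [Fintype Θ] (v w : Θ → ℝ) : ℝ := ∑ θ, v θ * w θ

/-- Convex conjugate of a function on the probability simplex:
`Φ*(v) = sup_{μ ∈ Δ_Θ} ⟨μ, v⟩ − Φ(μ)`. -/
noncomputable def conjF {Θ : Type*} [Fintype Θ] (Φ : (Θ → ℝ) → ℝ) (v : Θ → ℝ) : ℝ :=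
  sSup ((fun μ => ip μ v - Φ μ) '' probSimplex Θ)

/-- The continuous linear functional `w ↦ ⟨g, w⟩` associated with a vector `g : Θ → ℝ`;
used to express that `g` is a gradient. -/
noncomputable def toCLM {Θ : Type*} [Fintype Θ] (g : Θ → ℝ) : (Θ → ℝ) →L[ℝ] ℝ :=
  ∑ θ, g θ • (ContinuousLinearMap.proj θ : (Θ → ℝ) →L[ℝ] ℝ)

/-- Bregman divergence `D_Φ(μ', μ) = Φ(μ') − Φ(μ) − ⟨∇Φ(μ), μ' − μ⟩`, where the
gradient of `Φ` is given by `g`. -/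
noncomputable def bregDiv {Θ : Type*} [Fintype Θ] (Φ : (Θ → ℝ) → ℝ)
    (g : (Θ → ℝ) → Θ → ℝ) (μ' μ : Θ → ℝ) : ℝ :=
  Φ μ' - Φ μ - ip (g μ) (fun θ => μ' θ - μ θ)

/-- The proper loss `λ^Φ(μ) = Φ*(∇Φ(μ))·𝟏 − ∇Φ(μ)` associated with entropy `Φ`
with gradient `g`. -/
noncomputable def lamLoss {Θ : Type*} [Fintype Θ] (Φ : (Θ → ℝ) → ℝ)
    (g : (Θ → ℝ) → Θ → ℝ) (μ : Θ → ℝ) : Θ → ℝ :=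
  fun θ => conjF Φ (g μ) - g μ θ

/-- Negative Shannon entropy `(−H)(μ) = ∑ θ, μ(θ) log μ(θ)` (with `0 log 0 = 0`,
since `Real.log 0 = 0`). -/
noncomputable def negH {Θ : Type*} [Fintype Θ] (μ : Θ → ℝ) : ℝ :=
  ∑ θ, μ θ * Real.log (μ θ)

lemma toCLM_apply' {Θ : Type*} [Fintype Θ] (g w : Θ → ℝ) : toCLM g w = ip g w := by
  simp [toCLM, ip, ContinuousLinearMap.sum_apply]

lemma tangent_le' {Θ : Type*} [Fintype Θ] (Φ : (Θ → ℝ) → ℝ) (g : Θ → ℝ)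
    (hconv : ConvexOn ℝ (probSimplex Θ) Φ)
    {μ : Θ → ℝ} (hμ : μ ∈ probSimplex Θ)
    (hd : HasFDerivWithinAt Φ (toCLM g) (probSimplex Θ) μ)
    {ν : Θ → ℝ} (hν : ν ∈ probSimplex Θ) :
    ip g (fun θ => ν θ - μ θ) ≤ Φ ν - Φ μ := by
  set w : Θ → ℝ := fun θ => ν θ - μ θ with hw
  set p : ℝ → Θ → ℝ := fun t => μ + t • w with hpdef
  have hpt : ∀ t : ℝ, p t = (1 - t) • μ + t • ν := by
    intro t; funext θ
    simp only [hpdef, Pi.add_apply, Pi.smul_apply, smul_eq_mul, hw]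
    ring
  have hmaps : Set.MapsTo p (Set.Icc (0:ℝ) 1) (probSimplex Θ) := by
    intro t ht
    rw [hpt]
    exact hconv.1 hμ hν (by linarith [ht.2]) ht.1 (by ring)
  have hp0 : p 0 = μ := by rw [hpt]; simp
  have hp : HasDerivAt p w 0 := by
    have h1 : HasDerivAt (fun t : ℝ => t • w) ((1:ℝ) • w) 0 :=
      (hasDerivAt_id (0:ℝ)).smul_const w
    have h2 := h1.const_add μ
    simp only [one_smul] at h2
    exact h2
  have hcomp : HasDerivWithinAt (Φ ∘ p) (ip g w) (Set.Icc (0:ℝ) 1) 0 := by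
    have h := hd.comp_hasDerivWithinAt_of_eq (0:ℝ)
      (hp.hasDerivWithinAt (s := Set.Icc 0 1)) hmaps hp0.symm
    rwa [toCLM_apply'] at h
  rw [hasDerivWithinAt_iff_tendsto_slope, Set.Icc_diff_left,
    nhdsWithin_Ioc_eq_nhdsGT zero_lt_one] at hcomp
  refine le_of_tendsto hcomp ?_
  filter_upwards [Ioc_mem_nhdsGT_of_mem (Set.mem_Ico.2 ⟨le_refl 0, zero_lt_one⟩)] with t ht
  rw [slope_def_field]
  simp only [Function.comp_apply, sub_zero]
  rw [div_le_iff₀ ht.1]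
  have hcv := hconv.2 hμ hν (show (0:ℝ) ≤ 1 - t by linarith [ht.2]) ht.1.le (by ring)
  rw [← hpt] at hcv
  simp only [smul_eq_mul] at hcv
  rw [hp0]
  linarith

/-- Lemma 3 of the paper: the loss `λ^Φ(μ) = Φ*(∇Φ(μ))·𝟏 − ∇Φ(μ)`
associated with a differentiable entropy `Φ` is proper:
`⟨μ, λ^Φ(μ')⟩ ≥ ⟨μ, λ^Φ(μ)⟩`. -/
theorem lamLoss_proper {Θ : Type*} [Fintype Θ] [Nonempty Θ]
    (Φ : (Θ → ℝ) → ℝ) (gradΦ : (Θ → ℝ) → Θ → ℝ)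
    (hconv : ConvexOn ℝ (probSimplex Θ) Φ)
    (hlsc : LowerSemicontinuousOn Φ (probSimplex Θ))
    (hdiff : ∀ μ ∈ probSimplexRI Θ,
      HasFDerivWithinAt Φ (toCLM (gradΦ μ)) (probSimplex Θ) μ)
    (hFY : ∀ μ ∈ probSimplexRI Θ, conjF Φ (gradΦ μ) = ip μ (gradΦ μ) - Φ μ)
    (μ : Θ → ℝ) (hμ : μ ∈ probSimplexRI Θ)
    (μ' : Θ → ℝ) (hμ' : μ' ∈ probSimplexRI Θ) :
    ip μ (lamLoss Φ gradΦ μ') ≥ ip μ (lamLoss Φ gradΦ μ) := by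
  have hμS : μ ∈ probSimplex Θ := ⟨fun θ => (hμ.1 θ).le, hμ.2⟩
  have hμ'S : μ' ∈ probSimplex Θ := ⟨fun θ => (hμ'.1 θ).le, hμ'.2⟩
  have hbdd : BddAbove ((fun ν => ip ν (gradΦ μ') - Φ ν) '' probSimplex Θ) := by
    refine ⟨ip μ' (gradΦ μ') - Φ μ', ?_⟩
    rintro x ⟨ν, hν, rfl⟩
    have ht := tangent_le' Φ (gradΦ μ') hconv hμ'S (hdiff μ' hμ') hν
    have h1 : ip ν (gradΦ μ') = ip (gradΦ μ') ν := by simp [ip, mul_comm]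
    have h2 : ip (gradΦ μ') (fun θ => ν θ - μ' θ)
        = ip (gradΦ μ') ν - ip (gradΦ μ') μ' := by
      simp [ip, mul_sub, Finset.sum_sub_distrib]
    have h3 : ip μ' (gradΦ μ') = ip (gradΦ μ') μ' := by simp [ip, mul_comm]
    simp only [h1]
    linarith
  have hsup : ip μ (gradΦ μ') - Φ μ ≤ conjF Φ (gradΦ μ') :=
    le_csSup hbdd ⟨μ, hμS, rfl⟩
  have hL : ∀ ν, ip μ (lamLoss Φ gradΦ ν) = conjF Φ (gradΦ ν) - ip μ (gradΦ ν) := by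
    intro ν
    simp only [lamLoss, ip, mul_sub, Finset.sum_sub_distrib, ← Finset.sum_mul, hμ.2, one_mul]
  rw [hL, hL, hFY μ hμ]
  linarith
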